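/- For any finite directed graph G, N(G) is a polynomial in the variables x_v, v ∈ V(G). -/

import Mathlib

open scoped BigOperators

/-- The field of rational functions in variables indexed by `V` over `ℚ`. -/
abbrev K (V : Type) : Type := FractionRing (MvPolynomial V ℚ)

/-- The variable `x_v` seen inside the field of rational functions. -/
noncomputable def xv {V : Type} (v : V) : K V :=
  algebraMap (MvPolynomial V ℚ) (K V) (MvPolynomial.X v)

/-- `ψ_w = 1 / ∏ (x_{w_i} - x_{w_{i+1}})` for a word `w`. -/
noncomputable def psi {V : Type} (w : List V) : K V :=
  (((w.zip w.tail).map fun p => xv p.1 - xv p.2).prod)⁻¹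

/-- The word (list of vertices) associated to an enumeration `σ` of the vertex set `W`. -/
def wordOf {V : Type} (W : Finset V) (σ : Fin W.card ≃ W) : List V :=
  (List.finRange W.card).map fun i => ((σ i : W) : V)

/-- `σ` enumerates `W` in an order compatible with all edges of `E`:
the origin of every edge appears before its end. -/
def IsExt {V : Type} (W : Finset V) (E : Finset (V × V)) (σ : Fin W.card ≃ W) : Prop :=
  ∀ e ∈ E, ∃ i j : Fin W.card, i < j ∧ ((σ i : W) : V) = e.1 ∧ ((σ j : W) : V) = e.2

instance {V : Type} [DecidableEq V] (W : Finset V) (E : Finset (V × V)) (σ : Fin W.card ≃ W) :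
    Decidable (IsExt W E σ) := by unfold IsExt; exact inferInstance

/-- `Ψ(G) = Σ_{w ∈ L(G)} ψ_w`, the sum over linear extensions of the graph with
vertex set `W` and edge set `E`. -/
noncomputable def PsiG {V : Type} [DecidableEq V] (W : Finset V) (E : Finset (V × V)) : K V :=
  ∑ σ : Fin W.card ≃ W, if IsExt W E σ then psi (wordOf W σ) else 0

/-- `N(G) = Ψ(G) ⬝ ∏_{(a,b) ∈ E} (x_a - x_b)`. -/
noncomputable def NG {V : Type} [DecidableEq V] (W : Finset V) (E : Finset (V × V)) : K V :=
  PsiG W E * ∏ e ∈ E, (xv e.1 - xv e.2)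

/-- `φ(G)`, the formal sum of the linear extensions of `G` in the free abelian
group on words. -/
noncomputable def phiG {V : Type} [DecidableEq V] (W : Finset V) (E : Finset (V × V)) :
    List V →₀ ℤ :=
  ∑ σ : Fin W.card ≃ W, if IsExt W E σ then Finsupp.single (wordOf W σ) 1 else 0

/-- The graph has no directed circuit. -/
def Acyclic {V : Type} (E : Finset (V × V)) : Prop :=
  ∀ v : V, ¬ Relation.TransGen (fun a b => (a, b) ∈ E) v v

/-- The underlying undirected simple graph of the directed graph with edge set `E`. -/
def undirected {V : Type} (E : Finset (V × V)) : SimpleGraph V :=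
  SimpleGraph.fromRel fun a b => (a, b) ∈ E

/-- The cyclically-consecutive pairs of a list of vertices. -/
def cyclePairs {V : Type} [DecidableEq V] (vs : List V) : Finset (V × V) :=
  Finset.image (fun i : Fin vs.length => (vs.get i, vs.get (finRotate _ i))) Finset.univ

/-- `vs` is (the vertex list of) a cycle of the graph `E`, whose set of forward
edges (edges traversed in their graph orientation) is `HE`. -/
def IsCycle {V : Type} [DecidableEq V] (E : Finset (V × V)) (vs : List V)
    (HE : Finset (V × V)) : Prop :=
  2 ≤ vs.length ∧ vs.Nodup ∧ HE ⊆ cyclePairs vs ∧ HE ⊆ E ∧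
    ∀ p ∈ cyclePairs vs, p ∉ HE → (p.2, p.1) ∈ E

set_option linter.unusedSectionVars false
namespace NGProof

open MvPolynomial Finset

variable {V : Type} [Fintype V] [DecidableEq V]

noncomputable def dP (p : V × V) : MvPolynomial V ℚ := X p.1 - X p.2

lemma dP_ne_zero {u v : V} (h : u ≠ v) : dP (u, v) ≠ 0 :=
  sub_ne_zero_of_ne fun hx => h (MvPolynomial.X_injective hx)

lemma dP_swap (u v : V) : dP (v, u) = - dP (u, v) := by simp [dP]

def fi1 {n : ℕ} (i : Fin (n - 1)) : Fin n := ⟨i.1, by have := i.2; omega⟩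
def fi2 {n : ℕ} (i : Fin (n - 1)) : Fin n := ⟨i.1 + 1, by have := i.2; omega⟩

variable (ord : V ↪ ℕ)

def aP : Finset (V × V) := Finset.univ.filter fun p => ord p.1 < ord p.2

noncomputable def Δp : MvPolynomial V ℚ := ∏ p ∈ aP ord, dP p

def nrm (u v : V) : V × V := if ord u < ord v then (u, v) else (v, u)

lemma nrm_mem_aP {u v : V} (h : u ≠ v) : nrm ord u v ∈ aP ord := by
  rcases lt_or_gt_of_ne (fun he : ord u = ord v => h (ord.injective he)) with hlt | hgt
  · simp [nrm, aP, hlt]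
  · simp [nrm, aP, not_lt_of_gt hgt, hgt]

variable {n : ℕ}

noncomputable def cO (w : Fin n → V) : MvPolynomial V ℚ :=
  ∏ i : Fin (n - 1), dP (w (fi1 i), w (fi2 i))

def cN (w : Fin n → V) : Finset (V × V) :=
  Finset.image (fun i : Fin (n - 1) => nrm ord (w (fi1 i)) (w (fi2 i))) Finset.univ

noncomputable def epsP (w : Fin n → V) : MvPolynomial V ℚ :=
  ∏ i : Fin (n - 1), if ord (w (fi1 i)) < ord (w (fi2 i)) then 1 else -1

noncomputable def Bw (w : Fin n → V) : MvPolynomial V ℚ :=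
  epsP ord w * ∏ p ∈ aP ord \ cN ord w, dP p

lemma fi1_ne_fi2 {n : ℕ} (i : Fin (n - 1)) : fi1 i ≠ fi2 i := by
  simp [fi1, fi2, Fin.ext_iff]

lemma cN_subset (w : Fin n → V) (hw : Function.Injective w) : cN ord w ⊆ aP ord := by
  intro p hp
  rcases Finset.mem_image.1 hp with ⟨i, -, rfl⟩
  exact nrm_mem_aP ord (fun h => fi1_ne_fi2 i (hw h))

lemma nrm_inj (w : Fin n → V) (hw : Function.Injective w) :
    ∀ i ∈ (Finset.univ : Finset (Fin (n - 1))), ∀ j ∈ Finset.univ,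
      nrm ord (w (fi1 i)) (w (fi2 i)) = nrm ord (w (fi1 j)) (w (fi2 j)) → i = j := by
  intro i _ j _ hij
  unfold nrm at hij
  have key : (w (fi1 i) = w (fi1 j) ∧ w (fi2 i) = w (fi2 j)) ∨
      (w (fi1 i) = w (fi2 j) ∧ w (fi2 i) = w (fi1 j)) := by
    split_ifs at hij <;> simp only [Prod.mk.injEq] at hij <;> tauto
  have hv1 := i.2
  have hv2 := j.2
  rcases key with ⟨h1, h2⟩ | ⟨h1, h2⟩
  · have e1 : fi1 i = fi1 j := hw h1
    have : i.1 = j.1 := by simpa [fi1, Fin.ext_iff] using e1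
    exact Fin.ext this
  · have e1 : fi1 i = fi2 j := hw h1
    have e2 : fi2 i = fi1 j := hw h2
    have t1 : i.1 = j.1 + 1 := by simpa [fi1, fi2, Fin.ext_iff] using e1
    have t2 : i.1 + 1 = j.1 := by simpa [fi1, fi2, Fin.ext_iff] using e2
    omega

lemma dP_nrm (u v : V) :
    dP (nrm ord u v) = (if ord u < ord v then (1 : MvPolynomial V ℚ) else -1) * dP (u, v) := by
  unfold nrm
  split_ifs with h
  · rw [one_mul]
  · rw [dP_swap, neg_one_mul]

lemma prod_cN (w : Fin n → V) (hw : Function.Injective w) :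
    ∏ p ∈ cN ord w, dP p = epsP ord w * cO w := by
  unfold cN
  rw [Finset.prod_image (nrm_inj ord w hw)]
  unfold epsP cO
  rw [← Finset.prod_mul_distrib]
  exact Finset.prod_congr rfl fun i _ => dP_nrm ord _ _

lemma factorDelta (w : Fin n → V) (hw : Function.Injective w) :
    epsP ord w * cO w * ∏ p ∈ aP ord \ cN ord w, dP p = Δp ord := by
  rw [Δp, ← prod_cN ord w hw, mul_comm]
  exact Finset.prod_sdiff (cN_subset ord w hw)

lemma epsP_mul_self (w : Fin n → V) : epsP ord w * epsP ord w = 1 := by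
  unfold epsP
  rw [← Finset.prod_mul_distrib]
  refine Finset.prod_eq_one fun i _ => ?_
  split_ifs <;> ring

lemma cO_ne_zero (w : Fin n → V) (hw : Function.Injective w) : cO w ≠ 0 := by
  refine Finset.prod_ne_zero_iff.2 fun i _ => ?_
  exact dP_ne_zero fun h => fi1_ne_fi2 i (hw h)

lemma Δp_ne_zero : Δp ord ≠ 0 := by
  refine Finset.prod_ne_zero_iff.2 fun p hp => ?_
  have h2 : ord p.1 < ord p.2 := (Finset.mem_filter.1 hp).2
  exact dP_ne_zero (u := p.1) (v := p.2) fun h => by rw [h] at h2; omega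
lemma zip_tail_prod {M : Type} [CommMonoid M] (g : V × V → M) (m : ℕ) :
    ∀ (l : List V) (h : l.length = m + 1),
      ((l.zip l.tail).map g).prod =
        ∏ i : Fin m, g (l.get ⟨i.1, by have := i.2; omega⟩,
          l.get ⟨i.1 + 1, by have := i.2; omega⟩) := by
  induction m with
  | zero =>
    intro l h
    match l, h with
    | [a], _ => simp
  | succ m ih =>
    intro l h
    match l with
    | a :: b :: t =>
      have ih' := ih (b :: t) (by simpa using h)
      simp only [List.tail_cons] at ih'
      simp only [List.tail_cons, List.zip_cons_cons, List.map_cons, List.prod_cons]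
      rw [ih', Fin.prod_univ_succ]
      congr 1
noncomputable def iK : MvPolynomial V ℚ →+* K V := algebraMap (MvPolynomial V ℚ) (K V)

lemma iK_inj : Function.Injective (iK (V := V)) := IsFractionRing.injective _ _

lemma iK_ne_zero {p : MvPolynomial V ℚ} (h : p ≠ 0) : iK p ≠ 0 := by
  intro h0
  exact h (iK_inj (by simpa using h0))

lemma iK_X (v : V) : iK (X v) = xv v := rfl

lemma iK_dP (p : V × V) : iK (dP p) = xv p.1 - xv p.2 := by
  rw [dP, map_sub, iK_X, iK_X]

lemma psi_eq_gen (m : ℕ) (w : Fin m → V) :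
    psi ((List.finRange m).map w) = (iK (cO w))⁻¹ := by
  unfold psi
  match m with
  | 0 => simp [cO, iK]
  | m + 1 =>
    rw [zip_tail_prod (fun p => xv p.1 - xv p.2) m _ (by simp)]
    congr 1
    rw [cO, map_prod]
    refine Finset.prod_congr rfl fun i _ => ?_
    rw [iK_dP]
    congr 1 <;> simp [List.getElem_map, List.getElem_finRange, fi1, fi2]

lemma psi_eq (σ : Fin (Finset.univ : Finset V).card ≃ (Finset.univ : Finset V)) :
    psi (wordOf Finset.univ σ) = (iK (cO fun i => ((σ i : V))))⁻¹ := by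
  rw [wordOf]
  exact psi_eq_gen _ _
lemma wf_inj (σ : Fin (Finset.univ : Finset V).card ≃ (Finset.univ : Finset V)) :
    Function.Injective (fun i => ((σ i : V))) := fun i j h => σ.injective (Subtype.ext h)

lemma psi_mul_Delta (σ : Fin (Finset.univ : Finset V).card ≃ (Finset.univ : Finset V)) :
    psi (wordOf Finset.univ σ) * iK (Δp ord) = iK (Bw ord (fun i => ((σ i : V)))) := by
  set w : Fin (Finset.univ : Finset V).card → V := fun i => ((σ i : V)) with hw
  have h0 : iK (cO w) ≠ 0 := iK_ne_zero (cO_ne_zero w (wf_inj σ))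
  rw [psi_eq, ← factorDelta ord w (wf_inj σ), Bw, map_mul, map_mul, map_mul, ← hw]
  field_simp

noncomputable def Apoly (E : Finset (V × V)) : MvPolynomial V ℚ :=
  ∑ σ : Fin (Finset.univ : Finset V).card ≃ (Finset.univ : Finset V),
    if IsExt Finset.univ E σ then (∏ e ∈ E, dP e) * Bw ord (fun i => ((σ i : V))) else 0

lemma iK_Apoly (E : Finset (V × V)) :
    iK (Apoly ord E) = NG (Finset.univ : Finset V) E * iK (Δp ord) := by
  rw [NG, PsiG, Finset.sum_mul, Finset.sum_mul, Apoly, map_sum]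
  refine Finset.sum_congr rfl fun σ _ => ?_
  by_cases h : IsExt Finset.univ E σ
  · rw [if_pos h, if_pos h, map_mul]
    have h1 : iK (∏ e ∈ E, dP e) = ∏ e ∈ E, (xv e.1 - xv e.2) :=
      (map_prod _ _ _).trans (Finset.prod_congr rfl fun e _ => iK_dP e)
    have h2 := psi_mul_Delta ord σ
    calc iK (∏ e ∈ E, dP e) * iK (Bw ord fun i => ((σ i : V)))
        = (∏ e ∈ E, (xv e.1 - xv e.2)) * (psi (wordOf Finset.univ σ) * iK (Δp ord)) := by
          rw [h1, h2]
      _ = psi (wordOf Finset.univ σ) * (∏ e ∈ E, (xv e.1 - xv e.2)) * iK (Δp ord) := by ring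
  · rw [if_neg h, if_neg h, map_zero, zero_mul, zero_mul]
def rho (a b v : V) : V := if v = a then b else v

noncomputable def subst (a b : V) : MvPolynomial V ℚ →+* MvPolynomial V ℚ :=
  (MvPolynomial.aeval (fun v => X (rho a b v)) :
    MvPolynomial V ℚ →ₐ[ℚ] MvPolynomial V ℚ).toRingHom

lemma subst_X (a b v : V) : subst a b (X v) = X (rho a b v) := by
  simp [subst]

lemma subst_dP (a b : V) (p : V × V) :
    subst a b (dP p) = X (rho a b p.1) - X (rho a b p.2) := by
  rw [dP, map_sub, subst_X, subst_X]

lemma subst_dP_self {a b : V} (hab : a ≠ b) : subst a b (dP (a, b)) = 0 := by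
  rw [subst_dP, rho, rho, if_pos rfl, if_neg (Ne.symm hab), sub_self]

lemma dvd_of_subst_eq_zero {a b : V} {A : MvPolynomial V ℚ}
    (h : subst a b A = 0) : dP (a, b) ∣ A := by
  set I := Ideal.span ({dP (a, b)} : Set (MvPolynomial V ℚ)) with hI
  have key : (Ideal.Quotient.mk I).comp (subst a b) = Ideal.Quotient.mk I := by
    apply MvPolynomial.ringHom_ext
    · intro q
      simp [subst]
    · intro v
      simp only [RingHom.comp_apply, subst_X]
      by_cases hv : v = a
      · subst hv
        rw [rho, if_pos rfl]
        refine (Ideal.Quotient.eq (I := I)).2 ?_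
        have : dP (v, b) ∈ I := Ideal.subset_span rfl
        simpa [dP] using I.neg_mem this
      · rw [rho, if_neg hv]
  have h0 : Ideal.Quotient.mk I A = 0 := by
    have h2 : Ideal.Quotient.mk I (subst a b A) = Ideal.Quotient.mk I A :=
      congrArg (fun f : MvPolynomial V ℚ →+* _ => f A) key
    rw [h, map_zero] at h2
    exact h2.symm
  exact (Ideal.Quotient.eq_zero_iff_dvd _ _).1 h0

lemma prime_dP {a b : V} (hab : a ≠ b) : Prime (dP (a, b)) := by
  let e1 : MvPolynomial V ℚ ≃ₐ[ℚ] MvPolynomial (Option {v : V // v ≠ a}) ℚ :=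
    MvPolynomial.renameEquiv ℚ (Equiv.optionSubtypeNe a).symm
  let e2 : MvPolynomial (Option {v : V // v ≠ a}) ℚ ≃ₐ[ℚ]
      Polynomial (MvPolynomial {v : V // v ≠ a} ℚ) := MvPolynomial.optionEquivLeft ℚ _
  have hiff := MulEquiv.prime_iff (e1.toRingEquiv.trans e2.toRingEquiv).toMulEquiv
    (p := dP (a, b))
  rw [← hiff]
  have h1 : (e1.toRingEquiv.trans e2.toRingEquiv).toMulEquiv (dP (a, b)) =
      Polynomial.X - Polynomial.C (X ⟨b, Ne.symm hab⟩) := by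
    show e2 (e1 (dP (a, b))) = _
    rw [dP]
    simp only [map_sub]
    have ha : e1 (X a) = X (none : Option {v : V // v ≠ a}) := by
      simp [e1, MvPolynomial.renameEquiv_apply, MvPolynomial.rename_X,
        Equiv.optionSubtypeNe_symm_self]
    have hb : e1 (X b) = X (some ⟨b, Ne.symm hab⟩) := by
      simp [e1, MvPolynomial.renameEquiv_apply, MvPolynomial.rename_X,
        Equiv.optionSubtypeNe_symm_of_ne (Ne.symm hab)]
    rw [ha, hb]
    simp [e2, MvPolynomial.optionEquivLeft_X_none, MvPolynomial.optionEquivLeft_X_some]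
  rw [h1]
  exact Polynomial.prime_X_sub_C _

lemma dP_not_dvd {p q : V × V} (hp : p ∈ aP ord) (hq : q ∈ aP ord) (hpq : p ≠ q) :
    ¬ dP p ∣ dP q := by
  intro hdvd
  obtain ⟨c, hc⟩ := hdvd
  have h1 : ord p.1 < ord p.2 := (Finset.mem_filter.1 hp).2
  have h2 : ord q.1 < ord q.2 := (Finset.mem_filter.1 hq).2
  have hne1 : p.1 ≠ p.2 := fun h => by rw [h] at h1; omega
  have h0 : subst p.1 p.2 (dP q) = 0 := by
    rw [hc, map_mul]
    have : subst p.1 p.2 (dP p) = 0 := by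
      have := subst_dP_self (a := p.1) (b := p.2) hne1
      simpa using this
    rw [this, zero_mul]
  rw [subst_dP] at h0
  have heq : rho p.1 p.2 q.1 = rho p.1 p.2 q.2 :=
    MvPolynomial.X_injective (by linear_combination h0)
  unfold rho at heq
  split_ifs at heq with ha hb hb
  · exact absurd (ha.trans hb.symm) (fun h => by rw [h] at h2; omega)
  · exact hpq (Prod.ext ha.symm heq)
  · rw [heq, hb] at h2
    omega
  · exact absurd heq (fun h => by rw [h] at h2; omega)

lemma Delta_dvd (A : MvPolynomial V ℚ) (hdvd : ∀ p ∈ aP ord, dP p ∣ A) :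
    Δp ord ∣ A := by
  suffices h : ∀ S : Finset (V × V), S ⊆ aP ord → ∀ B : MvPolynomial V ℚ,
      (∀ p ∈ S, dP p ∣ B) → (∏ p ∈ S, dP p) ∣ B from
    h (aP ord) (Finset.Subset.refl _) A hdvd
  intro S
  induction S using Finset.induction_on with
  | empty => intro _ B _; simpa using one_dvd B
  | insert q S hqS ih =>
    intro hsub B hdv
    obtain ⟨B', hB'⟩ := hdv q (Finset.mem_insert_self _ _)
    have hqaP : q ∈ aP ord := hsub (Finset.mem_insert_self _ _)
    have hSsub : S ⊆ aP ord := fun p hp => hsub (Finset.mem_insert_of_mem hp)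
    have hstep : ∀ p ∈ S, dP p ∣ B' := by
      intro p hp
      have hpaP : p ∈ aP ord := hSsub hp
      have hp1 : p.1 ≠ p.2 := by
        have := (Finset.mem_filter.1 hpaP).2
        exact fun h => by rw [h] at this; omega
      have hd : dP p ∣ dP q * B' := hB' ▸ hdv p (Finset.mem_insert_of_mem hp)
      have hprime : Prime (dP p) := by
        have := prime_dP (a := p.1) (b := p.2) hp1
        simpa using this
      have hpq : p ≠ q := fun h => hqS (h ▸ hp)
      exact (hprime.dvd_or_dvd hd).resolve_left (dP_not_dvd ord hpaP hqaP hpq)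
    rw [Finset.prod_insert hqS, hB']
    exact mul_dvd_mul_left _ (ih hSsub B' hstep)
lemma deltaFactor {a b : V} (hab : ord a < ord b) {n : ℕ} (w : Fin n → V)
    (hw : Function.Injective w) (p q : Fin n) (hwp : w p = a) (hwq : w q = b)
    (hadj : p.1 + 1 = q.1 ∨ q.1 + 1 = p.1) (i0 : Fin (n - 1)) (hi0 : i0.1 = min p.1 q.1) :
    ∏ r ∈ (aP ord).erase (a, b), dP r =
      (if p.1 + 1 = q.1 then (1 : MvPolynomial V ℚ) else -1) *
        ((∏ k ∈ Finset.univ.erase i0, dP (w (fi1 k), w (fi2 k))) * Bw ord w) := by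
  have habne : a ≠ b := fun h => by rw [h] at hab; omega
  have habP : (a, b) ∈ aP ord := by simp [aP, hab]
  have hpq : p ≠ q := fun h => habne (by rw [← hwp, ← hwq, h])
  have hsplit : dP (a, b) * ∏ r ∈ (aP ord).erase (a, b), dP r = Δp ord := by
    rw [Finset.mul_prod_erase _ _ habP, Δp]
  have hsplit2 : cO w = dP (w (fi1 i0), w (fi2 i0)) *
      ∏ k ∈ Finset.univ.erase i0, dP (w (fi1 k), w (fi2 k)) :=
    (Finset.mul_prod_erase _ _ (Finset.mem_univ i0)).symm
  have hfact := factorDelta ord w hw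
  apply mul_left_cancel₀ (dP_ne_zero habne)
  rw [hsplit, ← hfact, hsplit2]
  rcases hadj with h | h
  · have h1 : fi1 i0 = p := Fin.ext (by simp only [fi1, hi0]; omega)
    have h2 : fi2 i0 = q := Fin.ext (by simp only [fi2, hi0]; omega)
    rw [if_pos h, h1, h2, hwp, hwq, Bw]
    ring
  · have hnp : ¬ p.1 + 1 = q.1 := by omega
    have h1 : fi1 i0 = q := Fin.ext (by simp only [fi1, hi0]; omega)
    have h2 : fi2 i0 = p := Fin.ext (by simp only [fi2, hi0]; omega)
    rw [if_neg hnp, h1, h2, hwp, hwq, dP_swap, Bw]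
    ring
lemma ab_not_in_cN {a b : V} {n : ℕ} (w : Fin n → V) (hw : Function.Injective w)
    (p q : Fin n) (hwp : w p = a) (hwq : w q = b)
    (hnadj : ¬(p.1 + 1 = q.1 ∨ q.1 + 1 = p.1)) : (a, b) ∉ cN ord w := by
  intro hmem
  obtain ⟨i, -, hi⟩ := Finset.mem_image.1 hmem
  unfold nrm at hi
  split_ifs at hi <;> rw [Prod.mk.injEq] at hi
  · have e1 : fi1 i = p := hw (hi.1.trans hwp.symm)
    have e2 : fi2 i = q := hw (hi.2.trans hwq.symm)
    have t1 : i.1 = p.1 := by simpa [fi1, Fin.ext_iff] using e1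
    have t2 : i.1 + 1 = q.1 := by simpa [fi2, Fin.ext_iff] using e2
    omega
  · have e1 : fi2 i = p := hw (hi.1.trans hwp.symm)
    have e2 : fi1 i = q := hw (hi.2.trans hwq.symm)
    have t1 : i.1 + 1 = p.1 := by simpa [fi2, Fin.ext_iff] using e1
    have t2 : i.1 = q.1 := by simpa [fi1, Fin.ext_iff] using e2
    omega

lemma subst_Bw_eq_zero {a b : V} (hab : ord a < ord b) {n : ℕ} (w : Fin n → V)
    (hnotin : (a, b) ∉ cN ord w) : subst a b (Bw ord w) = 0 := by
  have habne : a ≠ b := fun h => by rw [h] at hab; omega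
  have habP : (a, b) ∈ aP ord := by simp [aP, hab]
  have hmem : (a, b) ∈ aP ord \ cN ord w := Finset.mem_sdiff.2 ⟨habP, hnotin⟩
  rw [Bw, map_mul, map_prod, Finset.prod_eq_zero hmem (subst_dP_self habne), mul_zero]

lemma cancel_Bw {a b : V} (hab : ord a < ord b) {n : ℕ} (w : Fin n → V)
    (hw : Function.Injective w) (p q : Fin n) (hwp : w p = a) (hwq : w q = b)
    (hadj : p.1 + 1 = q.1 ∨ q.1 + 1 = p.1) :
    subst a b (Bw ord w) + subst a b (Bw ord (w ∘ (Equiv.swap p q))) = 0 := by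
  have habne : a ≠ b := fun h => by rw [h] at hab; omega
  have hpq : p ≠ q := fun h => habne (by rw [← hwp, ← hwq, h])
  have hpqv : p.1 ≠ q.1 := fun h => hpq (Fin.ext h)
  have hn : min p.1 q.1 < n - 1 := by
    have := p.2; have := q.2; omega
  set i0 : Fin (n - 1) := ⟨min p.1 q.1, hn⟩ with hi0def
  set w' : Fin n → V := w ∘ (Equiv.swap p q) with hw'def
  have hw'inj : Function.Injective w' := hw.comp (Equiv.injective _)
  have hw'p : w' p = b := by
    simp only [hw'def, Function.comp_apply, Equiv.swap_apply_left, hwq]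
  have hw'q : w' q = a := by
    simp only [hw'def, Function.comp_apply, Equiv.swap_apply_right, hwp]
  have hD1 := deltaFactor ord hab w hw p q hwp hwq hadj i0 rfl
  have hD2 := deltaFactor ord hab w' hw'inj q p hw'q hw'p hadj.symm i0
    (by simp only [hi0def]; omega)
  have hr : ∀ j, rho a b (w' j) = rho a b (w j) := by
    intro j
    rcases eq_or_ne j p with rfl | hjp
    · rw [hw'p, hwp]
      unfold rho
      rw [if_neg (Ne.symm habne), if_pos rfl]
    rcases eq_or_ne j q with rfl | hjq
    · rw [hw'q, hwq]
      unfold rho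
      rw [if_pos rfl, if_neg (Ne.symm habne)]
    · have : w' j = w j := by
        simp only [hw'def, Function.comp_apply, Equiv.swap_apply_of_ne_of_ne hjp hjq]
      rw [this]
  have hP : subst a b (∏ k ∈ Finset.univ.erase i0, dP (w' (fi1 k), w' (fi2 k))) =
      subst a b (∏ k ∈ Finset.univ.erase i0, dP (w (fi1 k), w (fi2 k))) := by
    rw [map_prod, map_prod]
    refine Finset.prod_congr rfl fun k _ => ?_
    rw [subst_dP, subst_dP, hr, hr]
  have hPne : subst a b (∏ k ∈ Finset.univ.erase i0, dP (w (fi1 k), w (fi2 k))) ≠ 0 := by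
    rw [map_prod]
    refine Finset.prod_ne_zero_iff.2 fun k hk => ?_
    rw [subst_dP]
    refine sub_ne_zero_of_ne fun hXeq => ?_
    have h5 : rho a b (w (fi1 k)) = rho a b (w (fi2 k)) := MvPolynomial.X_injective hXeq
    unfold rho at h5
    split_ifs at h5 with hx hy hy
    · exact (fi1_ne_fi2 k) (hw (hx.trans hy.symm))
    · have e1 : fi1 k = p := hw (hx.trans hwp.symm)
      have e2 : fi2 k = q := hw (by rw [hwq]; exact h5.symm)
      have t1 : k.1 = p.1 := by simpa [fi1, Fin.ext_iff] using e1
      have t2 : k.1 + 1 = q.1 := by simpa [fi2, Fin.ext_iff] using e2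
      exact (Finset.mem_erase.1 hk).1 (Fin.ext (by simp only [hi0def]; omega))
    · have e1 : fi2 k = p := hw (hy.trans hwp.symm)
      have e2 : fi1 k = q := hw (h5.trans hwq.symm)
      have t1 : k.1 + 1 = p.1 := by simpa [fi2, Fin.ext_iff] using e1
      have t2 : k.1 = q.1 := by simpa [fi1, Fin.ext_iff] using e2
      exact (Finset.mem_erase.1 hk).1 (Fin.ext (by simp only [hi0def]; omega))
    · exact (fi1_ne_fi2 k) (hw h5)
  rcases eq_or_ne (p.1 + 1) q.1 with hc | hc
  · have hc' : ¬ q.1 + 1 = p.1 := by omega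
    rw [if_pos hc] at hD1
    rw [if_neg hc'] at hD2
    have hs1 := congrArg (subst a b) hD1
    have hs2 := congrArg (subst a b) hD2
    rw [one_mul, map_mul] at hs1
    rw [map_mul, map_mul, map_neg, map_one] at hs2
    rw [hP] at hs2
    have key : subst a b (∏ k ∈ Finset.univ.erase i0, dP (w (fi1 k), w (fi2 k))) *
        (subst a b (Bw ord w) + subst a b (Bw ord w')) = 0 := by
      linear_combination hs2 - hs1
    rcases mul_eq_zero.1 key with h | h
    · exact absurd h hPne
    · exact h
  · have hc' : q.1 + 1 = p.1 := hadj.resolve_left hc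
    rw [if_neg hc] at hD1
    rw [if_pos hc'] at hD2
    have hs1 := congrArg (subst a b) hD1
    have hs2 := congrArg (subst a b) hD2
    rw [map_mul, map_mul, map_neg, map_one] at hs1
    rw [one_mul, map_mul] at hs2
    rw [hP] at hs2
    have key : subst a b (∏ k ∈ Finset.univ.erase i0, dP (w (fi1 k), w (fi2 k))) *
        (subst a b (Bw ord w) + subst a b (Bw ord w')) = 0 := by
      linear_combination hs1 - hs2
    rcases mul_eq_zero.1 key with h | h
    · exact absurd h hPne
    · exact h
lemma ext_transfer {E : Finset (V × V)} {a b : V} (habne : a ≠ b) (hEab : (a, b) ∉ E) (hEba : (b, a) ∉ E)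
    (σ : Fin (Finset.univ : Finset V).card ≃ (Finset.univ : Finset V)) (p q : Fin (Finset.univ : Finset V).card)
    (hwp : ((σ p : V)) = a) (hwq : ((σ q : V)) = b)
    (hadj : p.1 + 1 = q.1 ∨ q.1 + 1 = p.1)
    (hext : IsExt Finset.univ E σ) : IsExt Finset.univ E ((Equiv.swap p q).trans σ) := by
  intro e he
  obtain ⟨i, j, hij, h1, h2⟩ := hext e he
  have hpq : p ≠ q := by
    intro h
    exact habne (by rw [← hwp, ← hwq, h])
  refine ⟨Equiv.swap p q i, Equiv.swap p q j, ?_, ?_, ?_⟩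
  · have hx1 : ¬(i = p ∧ j = q) := by
      rintro ⟨rfl, rfl⟩
      have : e = (a, b) := Prod.ext (h1 ▸ hwp.symm).symm (h2 ▸ hwq.symm).symm
      exact hEab (this ▸ he)
    have hx2 : ¬(i = q ∧ j = p) := by
      rintro ⟨rfl, rfl⟩
      have : e = (b, a) := Prod.ext (h1 ▸ hwq.symm).symm (h2 ▸ hwp.symm).symm
      exact hEba (this ▸ he)
    simp only [Equiv.swap_apply_def]
    have hijv : i.1 < j.1 := hij
    split_ifs <;>
      (simp only [Fin.ext_iff, Fin.lt_def, not_and] at hx1 hx2 hpq ⊢ <;> omega)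
  · rw [Equiv.trans_apply, Equiv.swap_apply_self]; exact h1
  · rw [Equiv.trans_apply, Equiv.swap_apply_self]; exact h2
def paF (x : V) (σ : Fin (Finset.univ : Finset V).card ≃ (Finset.univ : Finset V)) :
    Fin (Finset.univ : Finset V).card := σ.symm ⟨x, Finset.mem_univ x⟩

lemma paF_spec (x : V) (σ : Fin (Finset.univ : Finset V).card ≃ (Finset.univ : Finset V)) :
    ((σ (paF x σ) : V)) = x := by rw [paF, Equiv.apply_symm_apply]

def AdjP (a b : V) (σ : Fin (Finset.univ : Finset V).card ≃ (Finset.univ : Finset V)) : Prop :=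
  (paF a σ).1 + 1 = (paF b σ).1 ∨ (paF b σ).1 + 1 = (paF a σ).1

instance (a b : V) (σ : Fin (Finset.univ : Finset V).card ≃ (Finset.univ : Finset V)) :
    Decidable (AdjP a b σ) := by unfold AdjP; exact inferInstance

lemma paF_swap_trans (x : V) (σ : Fin (Finset.univ : Finset V).card ≃ (Finset.univ : Finset V))
    (p q : Fin (Finset.univ : Finset V).card) :
    paF x ((Equiv.swap p q).trans σ) = Equiv.swap p q (paF x σ) := by
  rw [paF, paF, Equiv.symm_trans_apply, Equiv.symm_swap]

lemma swap_trans_swap_trans (σ : Fin (Finset.univ : Finset V).card ≃ (Finset.univ : Finset V))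
    (p q : Fin (Finset.univ : Finset V).card) :
    (Equiv.swap p q).trans ((Equiv.swap p q).trans σ) = σ := by
  ext x
  rw [Equiv.trans_apply, Equiv.trans_apply, Equiv.swap_apply_self]

lemma ext_transfer_back {E : Finset (V × V)} {a b : V} (habne : a ≠ b)
    (hEab : (a, b) ∉ E) (hEba : (b, a) ∉ E)
    (σ : Fin (Finset.univ : Finset V).card ≃ (Finset.univ : Finset V))
    (hA : AdjP a b σ)
    (hc : IsExt Finset.univ E ((Equiv.swap (paF a σ) (paF b σ)).trans σ)) :
    IsExt Finset.univ E σ := by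
  set τ := Equiv.swap (paF a σ) (paF b σ) with hτ
  set σ' := τ.trans σ with hσ'
  have hwp : ((σ' (paF b σ) : V)) = a := by
    simp only [hσ', Equiv.trans_apply, hτ, Equiv.swap_apply_right]
    exact paF_spec a σ
  have hwq : ((σ' (paF a σ) : V)) = b := by
    simp only [hσ', Equiv.trans_apply, hτ, Equiv.swap_apply_left]
    exact paF_spec b σ
  have hadj' : (paF b σ).1 + 1 = (paF a σ).1 ∨ (paF a σ).1 + 1 = (paF b σ).1 := hA.symm
  have := ext_transfer habne hEab hEba σ' (paF b σ) (paF a σ) hwp hwq hadj' hc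
  have heq : (Equiv.swap (paF b σ) (paF a σ)).trans σ' = σ := by
    rw [Equiv.swap_comm, hσ', hτ]
    exact swap_trans_swap_trans σ _ _
  rwa [heq] at this

lemma subst_Apoly_eq_zero {E : Finset (V × V)} {a b : V} (hab : ord a < ord b)
    (hEab : (a, b) ∉ E) (hEba : (b, a) ∉ E) :
    subst a b (Apoly ord E) = 0 := by
  have habne : a ≠ b := fun h => by rw [h] at hab; omega
  rw [Apoly, map_sum]
  refine Finset.sum_involution
    (fun σ _ => if AdjP a b σ then (Equiv.swap (paF a σ) (paF b σ)).trans σ else σ)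
    ?_ ?_ (fun σ _ => Finset.mem_univ _) ?_
  · -- cancellation
    intro σ _
    by_cases hA : AdjP a b σ
    · simp only [if_pos hA]
      by_cases hX : IsExt Finset.univ E σ
      · have hX' : IsExt Finset.univ E ((Equiv.swap (paF a σ) (paF b σ)).trans σ) :=
          ext_transfer habne hEab hEba σ _ _ (paF_spec a σ) (paF_spec b σ) hA hX
        rw [if_pos hX, if_pos hX', map_mul, map_mul, ← mul_add]
        have hcomp : (fun i => ((((Equiv.swap (paF a σ) (paF b σ)).trans σ) i : V))) =
            (fun i => ((σ i : V))) ∘ (Equiv.swap (paF a σ) (paF b σ)) := rfl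
        rw [hcomp,
          cancel_Bw ord hab _ (wf_inj σ) _ _ (paF_spec a σ) (paF_spec b σ) hA, mul_zero]
      · have hX' : ¬ IsExt Finset.univ E ((Equiv.swap (paF a σ) (paF b σ)).trans σ) :=
          fun hc => hX (ext_transfer_back habne hEab hEba σ hA hc)
        rw [if_neg hX, if_neg hX', map_zero, add_zero]
    · simp only [if_neg hA]
      have hF : subst a b (if IsExt Finset.univ E σ
          then (∏ e ∈ E, dP e) * Bw ord (fun i => ((σ i : V))) else 0) = 0 := by
        by_cases hX : IsExt Finset.univ E σ
        · rw [if_pos hX, map_mul,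
            subst_Bw_eq_zero ord hab _
              (ab_not_in_cN ord _ (wf_inj σ) _ _ (paF_spec a σ) (paF_spec b σ) hA),
            mul_zero]
        · rw [if_neg hX, map_zero]
      rw [hF, add_zero]
  · -- g_ne
    intro σ _ hne
    by_cases hA : AdjP a b σ
    · simp only [if_pos hA]
      intro heq
      have h1 := Equiv.ext_iff.1 heq (paF a σ)
      simp only [Equiv.trans_apply, Equiv.swap_apply_left] at h1
      have h2 : paF b σ = paF a σ := σ.injective h1
      have hb := paF_spec b σ
      have ha := paF_spec a σ
      rw [h2] at hb
      exact habne (hb.symm.trans ha).symm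
    · exfalso
      apply hne
      by_cases hX : IsExt Finset.univ E σ
      · rw [if_pos hX, map_mul,
          subst_Bw_eq_zero ord hab _
            (ab_not_in_cN ord _ (wf_inj σ) _ _ (paF_spec a σ) (paF_spec b σ) hA),
          mul_zero]
      · rw [if_neg hX, map_zero]
  · -- involution
    intro σ _
    by_cases hA : AdjP a b σ
    · simp only [if_pos hA]
      have h1 : paF a ((Equiv.swap (paF a σ) (paF b σ)).trans σ) = paF b σ := by
        rw [paF_swap_trans, Equiv.swap_apply_left]
      have h2 : paF b ((Equiv.swap (paF a σ) (paF b σ)).trans σ) = paF a σ := by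
        rw [paF_swap_trans, Equiv.swap_apply_right]
      have hA' : AdjP a b ((Equiv.swap (paF a σ) (paF b σ)).trans σ) := by
        unfold AdjP
        rw [h1, h2]
        exact hA.symm
      rw [if_pos hA', h1, h2, Equiv.swap_comm]
      exact swap_trans_swap_trans σ _ _
    · simp only [if_neg hA]
lemma dP_dvd_Apoly_of_edge {E : Finset (V × V)} {a b : V}
    (h : (a, b) ∈ E ∨ (b, a) ∈ E) : dP (a, b) ∣ Apoly ord E := by
  refine Finset.dvd_sum fun σ _ => ?_
  by_cases hX : IsExt Finset.univ E σ
  · rw [if_pos hX]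
    rcases h with h | h
    · exact (Finset.dvd_prod_of_mem dP h).mul_right _
    · refine (dvd_trans ⟨-1, by rw [dP_swap]; ring⟩ (Finset.dvd_prod_of_mem dP h)).mul_right _
  · rw [if_neg hX]
    exact dvd_zero _

lemma Delta_dvd_Apoly (E : Finset (V × V)) : Δp ord ∣ Apoly ord E := by
  refine Delta_dvd ord _ fun p hp => ?_
  have hlt : ord p.1 < ord p.2 := (Finset.mem_filter.1 hp).2
  by_cases hE : (p.1, p.2) ∈ E ∨ (p.2, p.1) ∈ E
  · exact dP_dvd_Apoly_of_edge ord hE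
  · push_neg at hE
    exact dvd_of_subst_eq_zero (subst_Apoly_eq_zero ord hlt hE.1 hE.2)

end NGProof

theorem NG_is_polynomial (V : Type) [Fintype V] [DecidableEq V] (E : Finset (V × V)) :
    ∃ p : MvPolynomial V ℚ,
      NG (Finset.univ : Finset V) E = algebraMap (MvPolynomial V ℚ) (K V) p := by
  classical
  let ord : V ↪ ℕ :=
    ⟨fun v => ((Fintype.equivFin V) v : ℕ),
      fun u v h => (Fintype.equivFin V).injective (Fin.val_injective h)⟩
  obtain ⟨B, hB⟩ := NGProof.Delta_dvd_Apoly ord E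
  refine ⟨B, ?_⟩
  have h1 := NGProof.iK_Apoly ord E
  rw [hB, map_mul] at h1
  have h2 : NGProof.iK (NGProof.Δp ord) ≠ 0 :=
    NGProof.iK_ne_zero (NGProof.Δp_ne_zero ord)
  have h3 : NG (Finset.univ : Finset V) E = NGProof.iK B := by
    rw [mul_comm (NG (Finset.univ : Finset V) E) _] at h1
    exact (mul_left_cancel₀ h2 h1).symm
  exact h3
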